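/- Let S be an exponentially stabilizing planar segment process with stabilization radii R = (R_x), i.e., there is c > 0 with P(sup_{y ∈ Q_n ∩ ℚ²} R_y ≥ n) ≤ exp(−c n) for all large n. For a > 0 define a site z ∈ ℤ² to be n-open if (a) R(Q_{6n}(nz)) < n and (b) no street of S intersecting Q_{6n}(nz) has length ≥ a, and n-closed otherwise. If n > b and S^{a,b} has an unbounded connected component, then the set of n-closed sites in ℤ² has an unbounded nearest-neighbor connected component. -/

import Mathlib

private lemma rt_symm {P : ℤ × ℤ → Prop} :
    Symmetric (fun u u' : ℤ × ℤ => (|u.1 - u'.1| + |u.2 - u'.2| = 1) ∧ P u ∧ P u') := by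
  rintro u u' ⟨h1, h2, h3⟩
  exact ⟨by rw [abs_sub_comm u'.1, abs_sub_comm u'.2]; exact h1, h3, h2⟩

private lemma rt_symm_rtg {P : ℤ × ℤ → Prop} {x y : ℤ × ℤ}
    (h : Relation.ReflTransGen
      (fun u u' : ℤ × ℤ => (|u.1 - u'.1| + |u.2 - u'.2| = 1) ∧ P u ∧ P u') x y) :
    Relation.ReflTransGen
      (fun u u' : ℤ × ℤ => (|u.1 - u'.1| + |u.2 - u'.2| = 1) ∧ P u ∧ P u') y x := by
  haveI : Std.Symm
      (fun u u' : ℤ × ℤ => (|u.1 - u'.1| + |u.2 - u'.2| = 1) ∧ P u ∧ P u') :=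
    ⟨fun _ _ h => rt_symm h⟩
  exact Std.Symm.symm _ _ h

private lemma rt_horiz_le {P : ℤ × ℤ → Prop} (d c : ℤ) :
    ∀ k : ℕ, (∀ t : ℤ, c ≤ t → t ≤ c + k → P (t, d)) →
    Relation.ReflTransGen
      (fun u u' : ℤ × ℤ => (|u.1 - u'.1| + |u.2 - u'.2| = 1) ∧ P u ∧ P u')
      (c, d) (c + k, d) := by
  intro k
  induction k with
  | zero => intro _; simpa using Relation.ReflTransGen.refl
  | succ k ih =>
    intro h
    have ih' := ih (fun t ht ht' => h t ht (by push_cast; omega))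
    refine ih'.tail ⟨?_, h _ (by omega) (by push_cast; omega), h _ (by push_cast; omega) (by push_cast; omega)⟩
    simp only []
    push_cast
    simp [abs_of_nonpos, show (c + (k:ℤ)) - (c + (k+1:ℤ)) = -1 by ring]

private lemma rt_horiz {P : ℤ × ℤ → Prop} (d c c' : ℤ)
    (h : ∀ t : ℤ, min c c' ≤ t → t ≤ max c c' → P (t, d)) :
    Relation.ReflTransGen
      (fun u u' : ℤ × ℤ => (|u.1 - u'.1| + |u.2 - u'.2| = 1) ∧ P u ∧ P u')
      (c, d) (c', d) := by
  rcases le_total c c' with hle | hle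
  · obtain ⟨k, hk⟩ := Int.le.dest hle
    subst hk
    exact rt_horiz_le d c k (fun t ht ht' => h t (by omega) (by omega))
  · obtain ⟨k, hk⟩ := Int.le.dest hle
    subst hk
    exact rt_symm_rtg
      (rt_horiz_le d c' k (fun t ht ht' => h t (by omega) (by omega)))

private lemma rt_vert_le {P : ℤ × ℤ → Prop} (c d : ℤ) :
    ∀ k : ℕ, (∀ t : ℤ, d ≤ t → t ≤ d + k → P (c, t)) →
    Relation.ReflTransGen
      (fun u u' : ℤ × ℤ => (|u.1 - u'.1| + |u.2 - u'.2| = 1) ∧ P u ∧ P u')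
      (c, d) (c, d + k) := by
  intro k
  induction k with
  | zero => intro _; simpa using Relation.ReflTransGen.refl
  | succ k ih =>
    intro h
    have ih' := ih (fun t ht ht' => h t ht (by push_cast; omega))
    refine ih'.tail ⟨?_, h _ (by omega) (by push_cast; omega), h _ (by push_cast; omega) (by push_cast; omega)⟩
    simp only []
    push_cast
    simp [abs_of_nonpos, show (d + (k:ℤ)) - (d + (k+1:ℤ)) = -1 by ring]

private lemma rt_vert {P : ℤ × ℤ → Prop} (c d d' : ℤ)
    (h : ∀ t : ℤ, min d d' ≤ t → t ≤ max d d' → P (c, t)) :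
    Relation.ReflTransGen
      (fun u u' : ℤ × ℤ => (|u.1 - u'.1| + |u.2 - u'.2| = 1) ∧ P u ∧ P u')
      (c, d) (c, d') := by
  rcases le_total d d' with hle | hle
  · obtain ⟨k, hk⟩ := Int.le.dest hle
    subst hk
    exact rt_vert_le c d k (fun t ht ht' => h t (by omega) (by omega))
  · obtain ⟨k, hk⟩ := Int.le.dest hle
    subst hk
    exact rt_symm_rtg
      (rt_vert_le c d' k (fun t ht ht' => h t (by omega) (by omega)))

private lemma rt_rect {P : ℤ × ℤ → Prop} (z z' : ℤ × ℤ)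
    (h : ∀ u : ℤ × ℤ, min z.1 z'.1 ≤ u.1 → u.1 ≤ max z.1 z'.1 →
      min z.2 z'.2 ≤ u.2 → u.2 ≤ max z.2 z'.2 → P u) :
    Relation.ReflTransGen
      (fun u u' : ℤ × ℤ => (|u.1 - u'.1| + |u.2 - u'.2| = 1) ∧ P u ∧ P u')
      z z' := by
  have h1 : Relation.ReflTransGen _ (z.1, z.2) (z'.1, z.2) :=
    rt_horiz z.2 z.1 z'.1 (fun t ht ht' =>
      h (t, z.2) ht ht' (min_le_left _ _) (le_max_left _ _))
  have h2 : Relation.ReflTransGen _ (z'.1, z.2) (z'.1, z'.2) :=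
    rt_vert z'.1 z.2 z'.2 (fun t ht ht' =>
      h (z'.1, t) (min_le_right _ _) (le_max_right _ _) ht ht')
  exact h1.trans h2

private lemma coord_abs_le_dist (x y : EuclideanSpace ℝ (Fin 2)) (i : Fin 2) :
    |x i - y i| ≤ dist x y := by
  rw [EuclideanSpace.dist_eq]
  rw [show |x i - y i| = Real.sqrt (|x i - y i| ^ 2) by
    rw [Real.sqrt_sq (abs_nonneg _)]]
  apply Real.sqrt_le_sqrt
  calc |x i - y i| ^ 2 = dist (x i) (y i) ^ 2 := by rw [Real.dist_eq]
    _ ≤ ∑ j, dist (x j) (y j) ^ 2 :=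
      Finset.single_le_sum (f := fun j => dist (x j) (y j) ^ 2)
        (fun j _ => sq_nonneg _) (Finset.mem_univ i)

private lemma dist_le_coords (x y : EuclideanSpace ℝ (Fin 2)) :
    dist x y ≤ |x 0 - y 0| + |x 1 - y 1| := by
  rw [EuclideanSpace.dist_eq, Fin.sum_univ_two, Real.dist_eq, Real.dist_eq]
  rw [show |x 0 - y 0| + |x 1 - y 1| =
    Real.sqrt ((|x 0 - y 0| + |x 1 - y 1|) ^ 2) by
      rw [Real.sqrt_sq (by positivity)]]
  apply Real.sqrt_le_sqrt
  nlinarith [abs_nonneg (x 0 - y 0), abs_nonneg (x 1 - y 1)]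

/-- Coupling step for `a_c < ∞`: a site `z ∈ ℤ²` is `n`-open if (a) the stabilization radii
in `Q_{6n}(nz)` are `< n` and (b) no street of length `≥ a` meets `Q_{6n}(nz)`.
If `n > b` and the graph `S^{a,b}` (vertices: endpoints of streets of length `≥ a`;
edges: either a street of length `≥ a`, or a bridge between endpoints at `S`-path distance,
hence Euclidean distance, at most `b`) has an unbounded connected component, then the set of
`n`-closed sites contains an infinite nearest-neighbor connected component in `ℤ²`. -/
theorem stmt_10 {V : Type*} (n : ℕ) (a b : ℝ) (hn : 0 < n) (ha : 0 < a)
    (hb : 0 < b) (hbn : b < n)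
    (R : EuclideanSpace ℝ (Fin 2) → ℝ)
    (streets : Set (EuclideanSpace ℝ (Fin 2) × EuclideanSpace ℝ (Fin 2)))
    (G : SimpleGraph V) (pos : V → EuclideanSpace ℝ (Fin 2))
    (hvert : ∀ v : V, ∃ s ∈ streets, a ≤ dist s.1 s.2 ∧ (pos v = s.1 ∨ pos v = s.2))
    (hedge : ∀ v w : V, G.Adj v w →
      dist (pos v) (pos w) ≤ b ∨
        ∃ s ∈ streets, a ≤ dist s.1 s.2 ∧
          ((pos v = s.1 ∧ pos w = s.2) ∨ (pos v = s.2 ∧ pos w = s.1)))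
    (hunbounded : ∃ v : V, ¬ Bornology.IsBounded (pos '' {w | G.Reachable v w})) :
    let Qset : ℝ → EuclideanSpace ℝ (Fin 2) → Set (EuclideanSpace ℝ (Fin 2)) :=
      fun k x => {y | |y 0 - x 0| ≤ k / 2 ∧ |y 1 - x 1| ≤ k / 2}
    let center : ℤ × ℤ → EuclideanSpace ℝ (Fin 2) :=
      fun z => WithLp.toLp 2 (fun i : Fin 2 => if i = 0 then (n : ℝ) * (z.1 : ℝ) else (n : ℝ) * (z.2 : ℝ))
    let nOpen : ℤ × ℤ → Prop := fun z =>
      (∀ y ∈ Qset (6 * n) (center z), R y < n) ∧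
      (∀ s ∈ streets, (segment ℝ s.1 s.2 ∩ Qset (6 * n) (center z)).Nonempty →
        dist s.1 s.2 < a)
    let adj : ℤ × ℤ → ℤ × ℤ → Prop := fun z w => |z.1 - w.1| + |z.2 - w.2| = 1
    ∃ z : ℤ × ℤ, ¬ nOpen z ∧
      Set.Infinite {w : ℤ × ℤ |
        Relation.ReflTransGen (fun u u' => adj u u' ∧ ¬ nOpen u ∧ ¬ nOpen u') z w} := by
  intro Qset center nOpen adj
  obtain ⟨v0, hv0⟩ := hunbounded
  have hn0 : (0:ℝ) < n := by exact_mod_cast hn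
  have hc0 : ∀ z : ℤ × ℤ, center z 0 = (n:ℝ) * z.1 := fun z => by simp [center]
  have hc1 : ∀ z : ℤ × ℤ, center z 1 = (n:ℝ) * z.2 := fun z => by
    simp [center, Fin.ext_iff]
  set site : EuclideanSpace ℝ (Fin 2) → ℤ × ℤ :=
    fun x => (round (x 0 / n), round (x 1 / n)) with hsite
  have site_bound : ∀ (x : EuclideanSpace ℝ (Fin 2)) (i : Fin 2),
      |x i - (n:ℝ) * round (x i / n)| ≤ n / 2 := by
    intro x i
    have h := abs_sub_round (x i / n)
    have he : x i - n * round (x i / n) = n * (x i / n - round (x i / n)) := by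
      field_simp
    rw [he, abs_mul, abs_of_pos hn0]
    calc (n:ℝ) * |x i / n - round (x i / n)| ≤ n * (1/2) :=
        mul_le_mul_of_nonneg_left h hn0.le
      _ = n / 2 := by ring
  -- closedness criterion
  have closedOf : ∀ s ∈ streets, a ≤ dist s.1 s.2 →
      ∀ x ∈ segment ℝ s.1 s.2, ∀ z : ℤ × ℤ,
      |x 0 - n * z.1| ≤ 3 * n → |x 1 - n * z.2| ≤ 3 * n → ¬ nOpen z := by
    intro s hs hlen x hx z h0 h1 hopen
    have := hopen.2 s hs ⟨x, hx, by
      refine ⟨?_, ?_⟩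
      · rw [hc0]; linarith
      · rw [hc1]; linarith⟩
    linarith
  -- interval bound
  have interval : ∀ (t c c' : ℤ) (xv : ℝ), min c c' ≤ t → t ≤ max c c' →
      |xv - n * c| ≤ 3 * n → |xv - n * c'| ≤ 3 * n → |xv - n * t| ≤ 3 * n := by
    intro t c c' xv ht1 ht2 hc hc'
    rw [abs_le] at hc hc' ⊢
    rcases le_total c c' with h | h
    · rw [min_eq_left h] at ht1; rw [max_eq_right h] at ht2
      have l1 : (n:ℝ) * c ≤ n * t :=
        mul_le_mul_of_nonneg_left (by exact_mod_cast ht1) hn0.le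
      have l2 : (n:ℝ) * t ≤ n * c' :=
        mul_le_mul_of_nonneg_left (by exact_mod_cast ht2) hn0.le
      constructor <;> linarith
    · rw [min_eq_right h] at ht1; rw [max_eq_left h] at ht2
      have l1 : (n:ℝ) * c' ≤ n * t :=
        mul_le_mul_of_nonneg_left (by exact_mod_cast ht1) hn0.le
      have l2 : (n:ℝ) * t ≤ n * c :=
        mul_le_mul_of_nonneg_left (by exact_mod_cast ht2) hn0.le
      constructor <;> linarith
  have rectClosed : ∀ (x : EuclideanSpace ℝ (Fin 2)),
      (∃ s ∈ streets, a ≤ dist s.1 s.2 ∧ x ∈ segment ℝ s.1 s.2) →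
      ∀ z z' : ℤ × ℤ,
      |x 0 - n * z.1| ≤ 3 * n → |x 1 - n * z.2| ≤ 3 * n →
      |x 0 - n * z'.1| ≤ 3 * n → |x 1 - n * z'.2| ≤ 3 * n →
      Relation.ReflTransGen (fun u u' => adj u u' ∧ ¬ nOpen u ∧ ¬ nOpen u') z z' := by
    rintro x ⟨s, hs, hlen, hx⟩ z z' h0 h1 h0' h1'
    apply rt_rect
    intro u hu1 hu2 hu3 hu4
    exact closedOf s hs hlen x hx u
      (interval u.1 z.1 z'.1 (x 0) hu1 hu2 h0 h0')
      (interval u.2 z.2 z'.2 (x 1) hu3 hu4 h1 h1')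
  -- walking along a long street
  have segWalk : ∀ s ∈ streets, a ≤ dist s.1 s.2 →
      Relation.ReflTransGen (fun u u' => adj u u' ∧ ¬ nOpen u ∧ ¬ nOpen u')
        (site s.1) (site s.2) := by
    intro s hs hlen
    set p := s.1 with hp
    set q := s.2 with hq
    set m : ℕ := ⌈2 * dist p q / n⌉₊ + 1 with hm
    have hm0 : (0:ℝ) < m := by positivity
    have hmD : dist p q / m ≤ n / 2 := by
      rw [div_le_iff₀ hm0]
      have h1 : 2 * dist p q / n ≤ m := by
        calc 2 * dist p q / n ≤ (⌈2 * dist p q / n⌉₊ : ℝ) := Nat.le_ceil _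
          _ ≤ m := by exact_mod_cast Nat.le_succ _
      have h2 := (div_le_iff₀ hn0).1 h1
      linarith
    set pts : ℕ → EuclideanSpace ℝ (Fin 2) :=
      fun k => p + ((k : ℝ) / m) • (q - p) with hpts
    have hseg : ∀ k : ℕ, k ≤ m → pts k ∈ segment ℝ p q := by
      intro k hk
      rw [segment_eq_image']
      exact ⟨(k:ℝ)/m, ⟨by positivity, by
        rw [div_le_one hm0]; exact_mod_cast hk⟩, rfl⟩
    have hstep : ∀ k : ℕ, dist (pts k) (pts (k+1)) ≤ n / 2 := by
      intro k
      have hdiff : pts (k+1) - pts k = ((1:ℝ)/m) • (q - p) := by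
        simp only [pts]
        push_cast
        module
      have : dist (pts k) (pts (k+1)) = (1/m) * dist p q := by
        rw [dist_comm, dist_eq_norm, hdiff, norm_smul]
        rw [show ‖(1:ℝ)/m‖ = 1/m from abs_of_pos (by positivity)]
        rw [dist_comm, dist_eq_norm]
      rw [this]
      calc (1/(m:ℝ)) * dist p q = dist p q / m := by ring
        _ ≤ n / 2 := hmD
    have claim : ∀ k : ℕ, k ≤ m →
        Relation.ReflTransGen (fun u u' => adj u u' ∧ ¬ nOpen u ∧ ¬ nOpen u')
          (site p) (site (pts k)) := by
      intro k
      induction k with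
      | zero =>
        intro _
        have h0 : pts 0 = p := by simp [pts]
        rw [h0]
      | succ k ih =>
        intro hk
        have hk' : k ≤ m := Nat.le_of_succ_le hk
        refine (ih hk').trans ?_
        apply rectClosed (pts k) ⟨s, hs, hlen, hseg k hk'⟩
        · calc |pts k 0 - (n:ℝ) * (site (pts k)).1| ≤ n / 2 := site_bound (pts k) 0
            _ ≤ 3 * n := by linarith
        · calc |pts k 1 - (n:ℝ) * (site (pts k)).2| ≤ n / 2 := site_bound (pts k) 1
            _ ≤ 3 * n := by linarith
        · calc |pts k 0 - (n:ℝ) * (site (pts (k+1))).1|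
              ≤ |pts k 0 - pts (k+1) 0| + |pts (k+1) 0 - (n:ℝ) * (site (pts (k+1))).1| := by
                have := abs_sub_le (pts k 0) (pts (k+1) 0) ((n:ℝ) * (site (pts (k+1))).1)
                exact this
            _ ≤ n/2 + n/2 := add_le_add ((coord_abs_le_dist _ _ 0).trans (hstep k))
                (site_bound (pts (k+1)) 0)
            _ ≤ 3 * n := by linarith
        · calc |pts k 1 - (n:ℝ) * (site (pts (k+1))).2|
              ≤ |pts k 1 - pts (k+1) 1| + |pts (k+1) 1 - (n:ℝ) * (site (pts (k+1))).2| :=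
                abs_sub_le _ _ _
            _ ≤ n/2 + n/2 := add_le_add ((coord_abs_le_dist _ _ 1).trans (hstep k))
                (site_bound (pts (k+1)) 1)
            _ ≤ 3 * n := by linarith
    have hpm : pts m = q := by
      simp only [pts]
      rw [div_self hm0.ne', one_smul]
      abel
    have := claim m le_rfl
    rwa [hpm] at this
  -- one graph edge
  have edgeWalk : ∀ v w : V, G.Adj v w →
      Relation.ReflTransGen (fun u u' => adj u u' ∧ ¬ nOpen u ∧ ¬ nOpen u')
        (site (pos v)) (site (pos w)) := by
    intro v w hvw
    rcases hedge v w hvw with hdist | ⟨s, hs, hlen, hvw'⟩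
    · obtain ⟨s, hs, hlen, hvs⟩ := hvert v
      have hxseg : pos v ∈ segment ℝ s.1 s.2 := by
        rcases hvs with h | h
        · rw [h]; exact left_mem_segment ℝ _ _
        · rw [h]; exact right_mem_segment ℝ _ _
      apply rectClosed (pos v) ⟨s, hs, hlen, hxseg⟩
      · calc |pos v 0 - (n:ℝ) * (site (pos v)).1| ≤ n / 2 := site_bound (pos v) 0
          _ ≤ 3 * n := by linarith
      · calc |pos v 1 - (n:ℝ) * (site (pos v)).2| ≤ n / 2 := site_bound (pos v) 1
          _ ≤ 3 * n := by linarith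
      · calc |pos v 0 - (n:ℝ) * (site (pos w)).1|
            ≤ |pos v 0 - pos w 0| + |pos w 0 - (n:ℝ) * (site (pos w)).1| := abs_sub_le _ _ _
          _ ≤ b + n/2 := add_le_add ((coord_abs_le_dist _ _ 0).trans hdist)
              (site_bound (pos w) 0)
          _ ≤ 3 * n := by linarith
      · calc |pos v 1 - (n:ℝ) * (site (pos w)).2|
            ≤ |pos v 1 - pos w 1| + |pos w 1 - (n:ℝ) * (site (pos w)).2| := abs_sub_le _ _ _
          _ ≤ b + n/2 := add_le_add ((coord_abs_le_dist _ _ 1).trans hdist)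
              (site_bound (pos w) 1)
          _ ≤ 3 * n := by linarith
    · rcases hvw' with ⟨h1, h2⟩ | ⟨h1, h2⟩
      · rw [h1, h2]; exact segWalk s hs hlen
      · rw [h1, h2]
        exact rt_symm_rtg (segWalk s hs hlen)
  -- whole walks
  have walkWalk : ∀ (u w : V), G.Walk u w →
      Relation.ReflTransGen (fun u u' => adj u u' ∧ ¬ nOpen u ∧ ¬ nOpen u')
        (site (pos u)) (site (pos w)) := by
    intro u w pth
    induction pth with
    | nil => exact Relation.ReflTransGen.refl
    | cons h _ ih => exact (edgeWalk _ _ h).trans ih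
  refine ⟨site (pos v0), ?_, ?_⟩
  · obtain ⟨s, hs, hlen, hvs⟩ := hvert v0
    have hxseg : pos v0 ∈ segment ℝ s.1 s.2 := by
      rcases hvs with h | h
      · rw [h]; exact left_mem_segment ℝ _ _
      · rw [h]; exact right_mem_segment ℝ _ _
    exact closedOf s hs hlen (pos v0) hxseg (site (pos v0))
      (le_trans (site_bound (pos v0) 0) (by linarith))
      (le_trans (site_bound (pos v0) 1) (by linarith))
  · by_contra hfin
    rw [Set.not_infinite] at hfin
    apply hv0
    have hsub : pos '' {w | G.Reachable v0 w} ⊆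
        ⋃ c ∈ {w : ℤ × ℤ | Relation.ReflTransGen
            (fun u u' => adj u u' ∧ ¬ nOpen u ∧ ¬ nOpen u') (site (pos v0)) w},
          Metric.closedBall (center c) n := by
      rintro x ⟨w, hw, rfl⟩
      obtain ⟨pth⟩ := (hw : G.Reachable v0 w)
      refine Set.mem_biUnion (walkWalk v0 w pth) ?_
      rw [Metric.mem_closedBall]
      calc dist (pos w) (center (site (pos w)))
          ≤ |pos w 0 - center (site (pos w)) 0| + |pos w 1 - center (site (pos w)) 1| :=
            dist_le_coords _ _
        _ ≤ n/2 + n/2 := by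
            rw [hc0, hc1]
            exact add_le_add (site_bound (pos w) 0) (site_bound (pos w) 1)
        _ = n := by ring
    exact (((Bornology.isBounded_biUnion hfin).2
      (fun c _ => Metric.isBounded_closedBall)).subset hsub)
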